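/- Let R > 0, 0 < β < π, k > 0, and let ε* = (R/2) min{1, 1/(sin β √(kR))}. Then for all complex s with |s| < ε*, the quantity μ(s) = √k · s sin β / √(R − s cos β + r(s)) satisfies |μ(s)| ≤ 1/√2. -/

import Mathlib

/-- The cut plane `C_{R,β} = ℂ \ {R cos β + it : |t| ≥ R sin β}`. -/
def cutPlane (R β : ℝ) : Set ℂ :=
  {s : ℂ | ∀ t : ℝ, R * Real.sin β ≤ |t| → s ≠ (R * Real.cos β : ℂ) + t * Complex.I}

/-- `r(s) = √(R² + s² − 2sR cos β)`, principal branch. -/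
noncomputable def rfun (R β : ℝ) (s : ℂ) : ℂ :=
  ((R : ℂ) ^ 2 + s ^ 2 - 2 * s * R * Real.cos β) ^ ((1 : ℂ) / 2)

/-- `μ(s) = √k · s sin β / √(R − s cos β + r(s))`, principal branches. -/
noncomputable def mufun (k R β : ℝ) (s : ℂ) : ℂ :=
  (Real.sqrt k : ℂ) * s * Real.sin β /
    (((R : ℂ) - s * Real.cos β + rfun R β s) ^ ((1 : ℂ) / 2))

/-- The principal square root has nonnegative real part. -/
lemma re_cpow_half_nonneg (z : ℂ) : 0 ≤ (z ^ ((1 : ℂ) / 2)).re := by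
  rcases eq_or_ne z 0 with rfl | hz
  · rw [Complex.zero_cpow (by norm_num)]; simp
  · rw [Complex.cpow_def_of_ne_zero hz, Complex.exp_re]
    apply mul_nonneg (Real.exp_nonneg _)
    have him : (Complex.log z * ((1 : ℂ) / 2)).im = z.arg / 2 := by
      simp [Complex.mul_im, Complex.log_im]
      ring
    rw [him]
    apply Real.cos_nonneg_of_mem_Icc
    constructor
    · have := Complex.neg_pi_lt_arg z
      linarith
    · have := Complex.arg_le_pi z
      linarith

lemma abs_cpow_half (z : ℂ) : ‖z ^ ((1 : ℂ) / 2)‖ = Real.sqrt ‖z‖ := by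
  have : ((1 : ℂ) / 2) = ((1 / 2 : ℝ) : ℂ) := by push_cast; ring
  rw [this, Complex.norm_cpow_real, Real.sqrt_eq_rpow]

theorem mu_small_near_origin (k R β : ℝ) (hk : 0 < k) (hR : 0 < R)
    (hβ0 : 0 < β) (hβπ : β < Real.pi) :
    ∀ s : ℂ, ‖s‖ < R / 2 * min 1 (1 / (Real.sin β * Real.sqrt (k * R))) →
      ‖mufun k R β s‖ ≤ 1 / Real.sqrt 2 := by
  intro s hs
  have hsβ : 0 < Real.sin β := Real.sin_pos_of_pos_of_lt_pi hβ0 hβπ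
  have hkR : 0 < Real.sqrt (k * R) := Real.sqrt_pos.mpr (mul_pos hk hR)
  set a : ℝ := ‖s‖ with ha
  have ha0 : 0 ≤ a := norm_nonneg s
  -- Bounds on a
  have haR : a < R / 2 := by
    have h1 : R / 2 * min 1 (1 / (Real.sin β * Real.sqrt (k * R))) ≤ R / 2 * 1 :=
      mul_le_mul_of_nonneg_left (min_le_left _ _) (by linarith)
    calc a < R / 2 * min 1 (1 / (Real.sin β * Real.sqrt (k * R))) := hs
      _ ≤ R / 2 := by linarith
  have ha2 : a < R / 2 * (1 / (Real.sin β * Real.sqrt (k * R))) := by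
    have h1 : R / 2 * min 1 (1 / (Real.sin β * Real.sqrt (k * R))) ≤
        R / 2 * (1 / (Real.sin β * Real.sqrt (k * R))) :=
      mul_le_mul_of_nonneg_left (min_le_right _ _) (by linarith)
    exact lt_of_lt_of_le hs h1
  -- key square bound: 2 * k * a^2 * sin^2 β ≤ R / 2
  have hsq : 2 * (Real.sqrt k) ^ 2 * a ^ 2 * (Real.sin β) ^ 2 ≤ R / 2 := by
    have hk' : (Real.sqrt k) ^ 2 = k := Real.sq_sqrt hk.le
    have hkr' : (Real.sqrt (k * R)) ^ 2 = k * R := Real.sq_sqrt (mul_pos hk hR).le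
    have hX : 0 < Real.sin β * Real.sqrt (k * R) := mul_pos hsβ hkR
    have ha2' : a * (Real.sin β * Real.sqrt (k * R)) ≤ R / 2 := by
      have h := mul_le_mul_of_nonneg_right ha2.le hX.le
      have heq : R / 2 * (1 / (Real.sin β * Real.sqrt (k * R))) *
          (Real.sin β * Real.sqrt (k * R)) = R / 2 := by
        field_simp
      linarith [heq ▸ h]
    have hsq2 : a * (Real.sin β * Real.sqrt (k * R)) * (a * (Real.sin β * Real.sqrt (k * R)))
        ≤ R / 2 * (R / 2) :=
      mul_le_mul ha2' ha2' (mul_nonneg ha0 hX.le) (by linarith)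
    have hkr2 : a ^ 2 * (Real.sin β) ^ 2 * (k * R)
        = a * (Real.sin β * Real.sqrt (k * R)) * (a * (Real.sin β * Real.sqrt (k * R))) := by
      rw [show a * (Real.sin β * Real.sqrt (k * R)) * (a * (Real.sin β * Real.sqrt (k * R)))
          = a ^ 2 * (Real.sin β) ^ 2 * (Real.sqrt (k * R)) ^ 2 from by ring, hkr']
    have h4 : a ^ 2 * (Real.sin β) ^ 2 * (k * R) ≤ (R / 2) ^ 2 := by
      rw [hkr2, sq]; exact hsq2
    rw [hk']
    nlinarith [h4, hR]
  -- the denominator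
  set w : ℂ := (R : ℂ) - s * Real.cos β + rfun R β s with hw
  have hwre : R / 2 ≤ w.re := by
    have h1 : (s * (Real.cos β : ℂ)).re = s.re * Real.cos β := by
      rw [Complex.mul_re, Complex.ofReal_re, Complex.ofReal_im]; ring
    have h2 : |s.re * Real.cos β| ≤ a := by
      rw [abs_mul]
      calc |s.re| * |Real.cos β| ≤ a * 1 := by
            apply mul_le_mul (Complex.abs_re_le_norm s) (Real.abs_cos_le_one β)
              (abs_nonneg _) ha0
        _ = a := mul_one a
    have h3 : 0 ≤ (rfun R β s).re := re_cpow_half_nonneg _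
    have : w.re = R - s.re * Real.cos β + (rfun R β s).re := by
      rw [hw, Complex.add_re, Complex.sub_re, Complex.ofReal_re, h1]
    rw [this]
    have := abs_le.mp h2
    linarith
  have hwabs : R / 2 ≤ ‖w‖ := le_trans hwre (Complex.re_le_norm w)
  have hwpos : 0 < ‖w‖ := lt_of_lt_of_le (by linarith) hwabs
  -- norm of mufun
  have hnorm : ‖mufun k R β s‖ = Real.sqrt k * a * Real.sin β / Real.sqrt ‖w‖ := by
    rw [mufun, ← hw, norm_div, abs_cpow_half, norm_mul, norm_mul]
    congr 2
    · congr 1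
      · rw [Complex.norm_real, Real.norm_eq_abs, abs_of_nonneg (Real.sqrt_nonneg k)]
    · rw [Complex.norm_real, Real.norm_eq_abs, abs_of_nonneg hsβ.le]
  rw [hnorm]
  have hsw : 0 < Real.sqrt ‖w‖ := Real.sqrt_pos.mpr hwpos
  have h2pos : 0 < Real.sqrt 2 := by positivity
  rw [div_le_div_iff₀ hsw h2pos]
  -- goal: √k * a * sin β * √2 ≤ 1 * √‖w‖
  rw [one_mul]
  have hlhs : 0 ≤ Real.sqrt k * a * Real.sin β * Real.sqrt 2 := by positivity
  rw [Real.le_sqrt hlhs (norm_nonneg w)]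
  have h2 : (Real.sqrt 2) ^ 2 = 2 := Real.sq_sqrt (by norm_num)
  calc (Real.sqrt k * a * Real.sin β * Real.sqrt 2) ^ 2
      = 2 * (Real.sqrt k) ^ 2 * a ^ 2 * (Real.sin β) ^ 2 := by
        rw [mul_pow, mul_pow, mul_pow, h2]; ring
    _ ≤ R / 2 := hsq
    _ ≤ ‖w‖ := hwabs
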